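/- Let r ≥ 3. Define Σ_{2r−2} to be the subcomplex of (M_r)^{*2}_Δ generated by the facets of dimension 2r−2. Then Σ_{2r−2} has exactly two connected components, each isomorphic (as a simplicial complex) to the join (M_r|S) * Δ_{r−1} of the restriction M_r|S with an (r−1)-simplex, where S = E_1 ∪ ⋯ ∪ E_{r−1}; and the involution on (M_r)^{*2}_Δ swapping the two join factors interchanges these two components. -/
import Mathlib


/-- Independence in the matroid `M_r` (ground set `Fin r × Fin r`; `(i,j)` is `v_{i+1}^{j+1}`
for `i < r-1` and `w_{j+1}` for `i = r-1`). -/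
def MrIndep (r : ℕ) (A : Finset (Fin r × Fin r)) : Prop :=
  A.card ≤ r ∧ ∀ i : Fin r, (i : ℕ) < r - 1 → (A.filter (fun p => p.1 = i)).card ≤ 1

/-- A face of the `2`-fold deleted join `(M_r)^{*2}_Δ`. -/
def Face2 (r : ℕ) (p : Finset (Fin r × Fin r) × Finset (Fin r × Fin r)) : Prop :=
  MrIndep r p.1 ∧ MrIndep r p.2 ∧ Disjoint p.1 p.2

/-- A facet of `(M_r)^{*2}_Δ`. -/
def Facet2 (r : ℕ) (p : Finset (Fin r × Fin r) × Finset (Fin r × Fin r)) : Prop :=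
  Face2 r p ∧ ∀ q, Face2 r q → p.1 ⊆ q.1 → p.2 ⊆ q.2 → q = p

/-- The last block `{w_1, …, w_r}`. -/
def lastBlock (r : ℕ) : Finset (Fin r × Fin r) :=
  Finset.univ.filter (fun p => (p.1 : ℕ) = r - 1)

/-- `S = E_1 ∪ ⋯ ∪ E_{r-1}`, the union of the first `r-1` blocks. -/
def Sblocks (r : ℕ) : Finset (Fin r × Fin r) :=
  Finset.univ.filter (fun p => (p.1 : ℕ) < r - 1)

/-- A face of the restriction `M_r|S`. -/
def FaceS (r : ℕ) (A : Finset (Fin r × Fin r)) : Prop :=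
  (∀ p ∈ A, (p.1 : ℕ) < r - 1) ∧
  ∀ i : Fin r, (A.filter (fun p => p.1 = i)).card ≤ 1

/-- Membership in the subcomplex `Σ_{2r-2}` generated by the facets of dimension `2r-2`. -/
def InSigmaLow (r : ℕ) (p : Finset (Fin r × Fin r) × Finset (Fin r × Fin r)) : Prop :=
  Face2 r p ∧ ∃ q, Facet2 r q ∧ q.1.card + q.2.card = 2 * r - 1 ∧ p.1 ⊆ q.1 ∧ p.2 ⊆ q.2

/-- The first component: row 1 in `S`, row 2 in the last block. -/
def Comp1 (r : ℕ) (p : Finset (Fin r × Fin r) × Finset (Fin r × Fin r)) : Prop :=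
  Face2 r p ∧ p.1 ⊆ Sblocks r ∧ p.2 ⊆ lastBlock r

/-- The second component: row 2 in `S`, row 1 in the last block. -/
def Comp2 (r : ℕ) (p : Finset (Fin r × Fin r) × Finset (Fin r × Fin r)) : Prop :=
  Face2 r p ∧ p.2 ⊆ Sblocks r ∧ p.1 ⊆ lastBlock r

section aux
variable {r : ℕ}

lemma MrIndep_mono {A B : Finset (Fin r × Fin r)} (h : A ⊆ B) (hB : MrIndep r B) :
    MrIndep r A :=
  ⟨le_trans (Finset.card_le_card h) hB.1, fun i hi =>
    le_trans (Finset.card_le_card (Finset.filter_subset_filter _ h)) (hB.2 i hi)⟩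

lemma mem_lastBlock {p : Fin r × Fin r} : p ∈ lastBlock r ↔ (p.1 : ℕ) = r - 1 := by
  simp [lastBlock]

lemma mem_Sblocks {p : Fin r × Fin r} : p ∈ Sblocks r ↔ (p.1 : ℕ) < r - 1 := by
  simp [Sblocks]

lemma disj_S_last : Disjoint (Sblocks r) (lastBlock r) := by
  rw [Finset.disjoint_left]
  intro p hp hq
  rw [mem_Sblocks] at hp; rw [mem_lastBlock] at hq; omega

lemma lastBlock_eq (hr : 1 ≤ r) :
    lastBlock r = Finset.univ.image (fun j : Fin r => ((⟨r - 1, by omega⟩ : Fin r), j)) := by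
  ext p
  simp only [mem_lastBlock, Finset.mem_image, Finset.mem_univ, true_and]
  constructor
  · intro h
    exact ⟨p.2, by rw [Prod.ext_iff]; exact ⟨Fin.ext h.symm, rfl⟩⟩
  · rintro ⟨j, rfl⟩; rfl

lemma lastBlock_card (hr : 1 ≤ r) : (lastBlock r).card = r := by
  rw [lastBlock_eq hr, Finset.card_image_of_injective _ (fun a b h => (Prod.ext_iff.1 h).2),
    Finset.card_univ, Fintype.card_fin]

lemma smalls_card (hr : 1 ≤ r) :
    (Finset.univ.filter (fun i : Fin r => (i : ℕ) < r - 1)).card = r - 1 := by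
  have h := Finset.card_filter_add_card_filter_not
    (s := (Finset.univ : Finset (Fin r))) (p := fun i => (i : ℕ) < r - 1)
  have h2 : Finset.univ.filter (fun i : Fin r => ¬ (i : ℕ) < r - 1) = {⟨r - 1, by omega⟩} := by
    ext i
    simp only [Finset.mem_filter, Finset.mem_univ, true_and, Finset.mem_singleton, not_lt]
    rw [Fin.ext_iff]
    simp only [Fin.val_mk]
    have := i.2; omega
  rw [h2, Finset.card_singleton, Finset.card_univ, Fintype.card_fin] at h
  omega

lemma MrIndep_lastBlock (hr : 1 ≤ r) : MrIndep r (lastBlock r) := by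
  refine ⟨le_of_eq (lastBlock_card hr), fun i hi => ?_⟩
  have : (lastBlock r).filter (fun p => p.1 = i) = ∅ := by
    apply Finset.filter_false_of_mem
    intro p hp
    rw [mem_lastBlock] at hp
    intro h; rw [h] at hp; omega
  rw [this]; simp

end aux
section aux2
variable {r : ℕ}

lemma Face2_swap {p : Finset (Fin r × Fin r) × Finset (Fin r × Fin r)} (h : Face2 r p) :
    Face2 r (p.2, p.1) := ⟨h.2.1, h.1, h.2.2.symm⟩

lemma Facet2_swap {p : Finset (Fin r × Fin r) × Finset (Fin r × Fin r)} (h : Facet2 r p) :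
    Facet2 r (p.2, p.1) := by
  refine ⟨Face2_swap h.1, fun q hq h1 h2 => ?_⟩
  have := h.2 (q.2, q.1) (Face2_swap hq) h2 h1
  rw [Prod.ext_iff] at this ⊢
  exact ⟨this.2, this.1⟩

/-- existence of a transversal extending a partial one -/
lemma exists_transversal (hr : 1 ≤ r) {A : Finset (Fin r × Fin r)}
    (hA : A ⊆ Sblocks r)
    (hA1 : ∀ i : Fin r, (A.filter (fun p => p.1 = i)).card ≤ 1) :
    ∃ T : Finset (Fin r × Fin r), A ⊆ T ∧ T ⊆ Sblocks r ∧ T.card = r - 1 ∧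
      ∀ i : Fin r, (i : ℕ) < r - 1 → (T.filter (fun p => p.1 = i)).card = 1 := by
  classical
  set g : Fin r → Fin r := fun i =>
    if h : (A.filter (fun p => p.1 = i)).Nonempty then h.choose.2 else ⟨0, by omega⟩ with hg
  set smalls := Finset.univ.filter (fun i : Fin r => (i : ℕ) < r - 1) with hsm
  refine ⟨smalls.image (fun i => (i, g i)), ?_, ?_, ?_, ?_⟩
  · intro a ha
    have haS : (a.1 : ℕ) < r - 1 := mem_Sblocks.1 (hA ha)
    have hne : (A.filter (fun p => p.1 = a.1)).Nonempty := ⟨a, Finset.mem_filter.2 ⟨ha, rfl⟩⟩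
    have hch := hne.choose_spec
    rw [Finset.mem_filter] at hch
    have : hne.choose = a := by
      have hcard := hA1 a.1
      have h1 : hne.choose ∈ A.filter (fun p => p.1 = a.1) := hne.choose_spec
      have h2 : a ∈ A.filter (fun p => p.1 = a.1) := Finset.mem_filter.2 ⟨ha, rfl⟩
      exact Finset.card_le_one.1 hcard _ h1 _ h2
    rw [Finset.mem_image]
    refine ⟨a.1, Finset.mem_filter.2 ⟨Finset.mem_univ _, haS⟩, ?_⟩
    have : g a.1 = a.2 := by rw [hg]; simp only [dif_pos hne]; rw [this]
    rw [this]
  · intro x hx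
    rw [Finset.mem_image] at hx
    obtain ⟨i, hi, rfl⟩ := hx
    rw [hsm, Finset.mem_filter] at hi
    exact mem_Sblocks.2 hi.2
  · rw [Finset.card_image_of_injective, hsm, smalls_card hr]
    intro a b hab
    exact (Prod.ext_iff.1 hab).1
  · intro i hi
    have : (smalls.image (fun i => (i, g i))).filter (fun p => p.1 = i) = {(i, g i)} := by
      ext x
      simp only [Finset.mem_filter, Finset.mem_image, Finset.mem_singleton]
      constructor
      · rintro ⟨⟨j, hj, rfl⟩, h2⟩
        simp only at h2
        rw [h2]
      · rintro rfl
        exact ⟨⟨i, Finset.mem_filter.2 ⟨Finset.mem_univ _, hi⟩, rfl⟩, rfl⟩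
    rw [this, Finset.card_singleton]

end aux2
section aux3
variable {r : ℕ}

lemma facet_last_T (hr : 1 ≤ r) {T : Finset (Fin r × Fin r)} (hTS : T ⊆ Sblocks r)
    (hT1 : ∀ i : Fin r, (i : ℕ) < r - 1 → (T.filter (fun p => p.1 = i)).card = 1)
    (hTc : T.card = r - 1) :
    Facet2 r (lastBlock r, T) := by
  constructor
  · refine ⟨MrIndep_lastBlock hr, ⟨?_, fun i hi => le_of_eq (hT1 i hi)⟩, ?_⟩
    · show T.card ≤ r; omega
    · show Disjoint (lastBlock r) T
      exact (disj_S_last.mono_left hTS).symm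
  · rintro ⟨q1, q2⟩ hq h1 h2
    have hq1 : q1 = lastBlock r := by
      refine (Finset.eq_of_subset_of_card_le h1 ?_).symm
      rw [lastBlock_card hr]; exact hq.1.1
    have hq2 : q2 = T := by
      apply Finset.Subset.antisymm _ h2
      intro x hx
      have hxS : (x.1 : ℕ) < r - 1 := by
        have hxlast : x ∉ lastBlock r := by
          intro hc
          rw [← hq1] at hc
          exact (Finset.disjoint_left.1 hq.2.2) hc hx
        rw [mem_lastBlock] at hxlast
        have := x.1.2; omega
      have hfib := hT1 x.1 hxS
      obtain ⟨t, ht⟩ := Finset.card_eq_one.1 hfib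
      have htT : t ∈ T ∧ t.1 = x.1 := by
        have : t ∈ T.filter (fun p => p.1 = x.1) := ht ▸ Finset.mem_singleton_self t
        exact Finset.mem_filter.1 this
      have hx_eq : x = t := by
        by_contra hne
        have hx2 : x ∈ q2.filter (fun p => p.1 = x.1) := Finset.mem_filter.2 ⟨hx, rfl⟩
        have ht2 : t ∈ q2.filter (fun p => p.1 = x.1) := Finset.mem_filter.2 ⟨h2 htT.1, htT.2⟩
        have : ({x, t} : Finset (Fin r × Fin r)) ⊆ q2.filter (fun p => p.1 = x.1) := by
          intro y hy; rw [Finset.mem_insert, Finset.mem_singleton] at hy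
          rcases hy with rfl | rfl
          exacts [hx2, ht2]
        have hcard2 : ({x, t} : Finset (Fin r × Fin r)).card = 2 :=
          Finset.card_pair hne
        have hcc := Finset.card_le_card this
        have hle : (q2.filter (fun p => p.1 = x.1)).card ≤ 1 := hq.2.1.2 x.1 hxS
        omega
      rw [hx_eq]; exact htT.1
    rw [Prod.ext_iff]; exact ⟨hq1, hq2⟩

end aux3
section aux4
variable {r : ℕ}

lemma facet_classify (hr : 3 ≤ r) {q : Finset (Fin r × Fin r) × Finset (Fin r × Fin r)}
    (hq : Facet2 r q) (h1c : q.1.card = r) (h2c : q.2.card = r - 1) :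
    q.1 = lastBlock r ∧ q.2 ⊆ Sblocks r := by
  classical
  obtain ⟨⟨hi1, hi2, hd⟩, hmax⟩ := hq
  -- Step A: every small fiber of q.2 is nonempty
  have stepA : ∀ i : Fin r, (i : ℕ) < r - 1 → (q.2.filter (fun p => p.1 = i)).Nonempty := by
    intro i hi
    by_contra hemp
    rw [Finset.not_nonempty_iff_eq_empty] at hemp
    set R := Finset.univ.filter (fun p : Fin r × Fin r => p.1 = i) with hR
    have hRcard : R.card = r := by
      have hRe : R = Finset.univ.image (fun j : Fin r => (i, j)) := by
        ext p
        simp only [hR, Finset.mem_filter, Finset.mem_univ, true_and, Finset.mem_image]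
        constructor
        · intro h; exact ⟨p.2, by rw [Prod.ext_iff]; exact ⟨h.symm, rfl⟩⟩
        · rintro ⟨j, rfl⟩; rfl
      rw [hRe, Finset.card_image_of_injective _ (fun a b h => (Prod.ext_iff.1 h).2),
        Finset.card_univ, Fintype.card_fin]
    have hsub : R ∩ (q.1 ∪ q.2) ⊆
        q.1.filter (fun p => p.1 = i) ∪ q.2.filter (fun p => p.1 = i) := by
      intro x hx
      rw [Finset.mem_inter, Finset.mem_union] at hx
      have hxi : x.1 = i := (Finset.mem_filter.1 hx.1).2
      rcases hx.2 with h | h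
      · exact Finset.mem_union_left _ (Finset.mem_filter.2 ⟨h, hxi⟩)
      · exact Finset.mem_union_right _ (Finset.mem_filter.2 ⟨h, hxi⟩)
    have hint : (R ∩ (q.1 ∪ q.2)).card ≤ 1 := by
      have hcc := Finset.card_le_card hsub
      have hu := Finset.card_union_le (q.1.filter (fun p => p.1 = i))
        (q.2.filter (fun p => p.1 = i))
      have hf1 := hi1.2 i hi
      have hf2 : (q.2.filter (fun p => p.1 = i)).card = 0 := by rw [hemp]; rfl
      omega
    have hsd := Finset.card_inter_add_card_sdiff R (q.1 ∪ q.2)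
    have hne : (R \ (q.1 ∪ q.2)).Nonempty := by
      rw [← Finset.card_pos]; omega
    obtain ⟨x, hx⟩ := hne
    rw [Finset.mem_sdiff, Finset.mem_union] at hx
    have hxi : x.1 = i := (Finset.mem_filter.1 hx.1).2
    have hface : Face2 r (q.1, insert x q.2) := by
      refine ⟨hi1, ⟨?_, ?_⟩, ?_⟩
      · show (insert x q.2).card ≤ r
        have := Finset.card_insert_le x q.2
        omega
      · intro j hj
        show ((insert x q.2).filter (fun p => p.1 = j)).card ≤ 1
        rw [Finset.filter_insert]
        split_ifs with hxj
        · have : j = i := by rw [← hxj, hxi]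
          subst this
          rw [hemp]
          simp
        · exact hi2.2 j hj
      · show Disjoint q.1 (insert x q.2)
        rw [Finset.disjoint_insert_right]
        exact ⟨fun hc => hx.2 (Or.inl hc), hd⟩
    have := hmax _ hface (Finset.Subset.refl _) (Finset.subset_insert _ _)
    have hxq2 : x ∈ q.2 := by
      have h2 := (Prod.ext_iff.1 this).2
      simp only at h2
      rw [← h2]
      exact Finset.mem_insert_self _ _
    exact hx.2 (Or.inr hxq2)
  -- Step B: q.2 ⊆ Sblocks
  set fib : Fin r → ℕ := fun i => (q.2.filter (fun p => p.1 = i)).card with hfib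
  have hsum : ∑ i : Fin r, fib i = q.2.card :=
    (Finset.card_eq_sum_card_fiberwise (fun x _ => Finset.mem_univ x.1)).symm
  set smalls := Finset.univ.filter (fun i : Fin r => (i : ℕ) < r - 1) with hsm
  have hsm1 : smalls.card ≤ ∑ i ∈ smalls, fib i := by
    rw [Finset.card_eq_sum_ones]
    apply Finset.sum_le_sum
    intro i hi
    rw [hsm, Finset.mem_filter] at hi
    exact Finset.card_pos.2 (stepA i hi.2)
  have hsm2 : ∑ i ∈ smalls, fib i + ∑ i ∈ Finset.univ.filter (fun i : Fin r => ¬ (i : ℕ) < r - 1), fib i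
      = ∑ i : Fin r, fib i := Finset.sum_filter_add_sum_filter_not _ _ _
  have hL : (⟨r - 1, by omega⟩ : Fin r) ∈ Finset.univ.filter (fun i : Fin r => ¬ (i : ℕ) < r - 1) := by
    simp only [Finset.mem_filter, Finset.mem_univ, true_and, Fin.val_mk]
    omega
  have hLle := Finset.single_le_sum (f := fib) (fun i _ => Nat.zero_le _) hL
  have hLz : fib ⟨r - 1, by omega⟩ = 0 := by
    have := smalls_card (r := r) (by omega)
    rw [← hsm] at this
    omega
  have stepB : q.2 ⊆ Sblocks r := by
    intro p hp
    rw [mem_Sblocks]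
    by_contra hc
    have hpl : p.1 = (⟨r - 1, by omega⟩ : Fin r) := by
      rw [Fin.ext_iff]; simp only [Fin.val_mk]
      have := p.1.2; omega
    have : p ∈ q.2.filter (fun p => p.1 = (⟨r - 1, by omega⟩ : Fin r)) :=
      Finset.mem_filter.2 ⟨hp, hpl⟩
    have hpos : 0 < fib ⟨r - 1, by omega⟩ := Finset.card_pos.2 ⟨p, this⟩
    omega
  refine ⟨?_, stepB⟩
  -- Step C: q.1 = lastBlock
  have hC : lastBlock r ⊆ q.1 := by
    intro w hw
    by_contra hwq
    have hwv : (w.1 : ℕ) = r - 1 := mem_lastBlock.1 hw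
    have hwq2 : w ∉ q.2 := by
      intro hc
      have := mem_Sblocks.1 (stepB hc)
      omega
    have hface : Face2 r (q.1, insert w q.2) := by
      refine ⟨hi1, ⟨?_, ?_⟩, ?_⟩
      · show (insert w q.2).card ≤ r
        have := Finset.card_insert_le w q.2
        omega
      · intro j hj
        show ((insert w q.2).filter (fun p => p.1 = j)).card ≤ 1
        rw [Finset.filter_insert]
        split_ifs with hwj
        · exfalso
          rw [hwj] at hwv
          omega
        · exact hi2.2 j hj
      · show Disjoint q.1 (insert w q.2)
        rw [Finset.disjoint_insert_right]
        exact ⟨hwq, hd⟩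
    have := hmax _ hface (Finset.Subset.refl _) (Finset.subset_insert _ _)
    have h2 := (Prod.ext_iff.1 this).2
    simp only at h2
    rw [← h2] at hwq2
    exact hwq2 (Finset.mem_insert_self _ _)
  refine (Finset.eq_of_subset_of_card_le hC ?_).symm
  rw [lastBlock_card (by omega : 1 ≤ r)]
  exact le_of_eq h1c

end aux4
section aux5
variable {r : ℕ}

lemma faceS_of_comp1 {p : Finset (Fin r × Fin r) × Finset (Fin r × Fin r)}
    (h : Comp1 r p) : FaceS r p.1 := by
  refine ⟨fun a ha => mem_Sblocks.1 (h.2.1 ha), fun i => ?_⟩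
  by_cases hi : (i : ℕ) < r - 1
  · exact h.1.1.2 i hi
  · have : p.1.filter (fun q => q.1 = i) = ∅ := by
      apply Finset.filter_false_of_mem
      intro a ha hc
      have := mem_Sblocks.1 (h.2.1 ha)
      rw [hc] at this
      exact hi this
    rw [this]; simp

lemma comp1_to_sigma (hr : 3 ≤ r) {p : Finset (Fin r × Fin r) × Finset (Fin r × Fin r)}
    (h : Comp1 r p) : InSigmaLow r p := by
  obtain ⟨T, hAT, hTS, hTc, hT1⟩ :=
    exists_transversal (by omega : 1 ≤ r) h.2.1 (faceS_of_comp1 h).2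
  refine ⟨h.1, (T, lastBlock r), Facet2_swap (facet_last_T (by omega) hTS hT1 hTc), ?_, hAT, h.2.2⟩
  show T.card + (lastBlock r).card = 2 * r - 1
  rw [hTc, lastBlock_card (by omega : 1 ≤ r)]
  omega

lemma comp1_swap {p : Finset (Fin r × Fin r) × Finset (Fin r × Fin r)} :
    Comp1 r p ↔ Comp2 r (p.2, p.1) := by
  constructor
  · rintro ⟨hf, h1, h2⟩
    exact ⟨Face2_swap hf, h1, h2⟩
  · rintro ⟨hf, h1, h2⟩
    exact ⟨Face2_swap hf, h1, h2⟩

lemma comp1_of_parts (hr : 3 ≤ r) (A : Finset (Fin r × Fin r)) (hA : FaceS r A)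
    (B : Finset (Fin r)) :
    Comp1 r (A, B.image (fun j => ((⟨r - 1, by omega⟩ : Fin r), j))) := by
  have himg : ∀ x ∈ B.image (fun j => ((⟨r - 1, by omega⟩ : Fin r), j)),
      (x.1 : ℕ) = r - 1 := by
    intro x hx
    rw [Finset.mem_image] at hx
    obtain ⟨j, _, rfl⟩ := hx
    rfl
  refine ⟨⟨⟨?_, fun i hi => hA.2 i⟩, ⟨?_, ?_⟩, ?_⟩, fun a ha => mem_Sblocks.2 (hA.1 a ha), ?_⟩
  · -- A.card ≤ r
    have hfib := Finset.card_eq_sum_card_fiberwise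
      (s := A) (t := (Finset.univ : Finset (Fin r))) (f := Prod.fst) (fun x _ => Finset.mem_univ _)
    calc A.card = ∑ i : Fin r, (A.filter (fun p => p.1 = i)).card := hfib
    _ ≤ ∑ _i : Fin r, 1 := Finset.sum_le_sum (fun i _ => hA.2 i)
    _ = r := by simp
  · show (B.image (fun j => ((⟨r - 1, by omega⟩ : Fin r), j))).card ≤ r
    calc (B.image (fun j => ((⟨r - 1, by omega⟩ : Fin r), j))).card ≤ B.card := Finset.card_image_le
    _ ≤ Fintype.card (Fin r) := Finset.card_le_univ B
    _ = r := Fintype.card_fin r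
  · intro i hi
    show ((B.image (fun j => ((⟨r - 1, by omega⟩ : Fin r), j))).filter (fun p => p.1 = i)).card ≤ 1
    have : (B.image (fun j => ((⟨r - 1, by omega⟩ : Fin r), j))).filter (fun p => p.1 = i) = ∅ := by
      apply Finset.filter_false_of_mem
      intro x hx hc
      have := himg x hx
      rw [hc] at this
      omega
    rw [this]; simp
  · show Disjoint A (B.image (fun j => ((⟨r - 1, by omega⟩ : Fin r), j)))
    rw [Finset.disjoint_left]
    intro a ha hb
    have h1 := hA.1 a ha
    have h2 := himg a hb
    omega
  · intro x hx
    exact mem_lastBlock.2 (himg x hx)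

end aux5
section aux6
variable {r : ℕ}

lemma sigma_swap {p : Finset (Fin r × Fin r) × Finset (Fin r × Fin r)}
    (h : InSigmaLow r (p.2, p.1)) : InSigmaLow r p := by
  obtain ⟨hf, q, hq, hc, h1, h2⟩ := h
  exact ⟨Face2_swap hf, (q.2, q.1), Facet2_swap hq, by show q.2.card + q.1.card = _; omega, h2, h1⟩

end aux6

/-- The subcomplex `Σ_{2r-2}` of `(M_r)^{*2}_Δ` generated by the facets of dimension `2r-2`
is the union of two components that meet only in the empty face, are interchanged by the
involution swapping the two rows, and each of which is isomorphic (by a cardinality-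
preserving bijection of faces) to the join `(M_r|S) * Δ_{r-1}` of the restriction `M_r|S`
with the full simplex on `r` vertices. -/
theorem stmt14 (r : ℕ) (hr : 3 ≤ r) :
    (∀ p, InSigmaLow r p ↔ (Comp1 r p ∨ Comp2 r p)) ∧
    (∀ p, Comp1 r p → Comp2 r p → p = (∅, ∅)) ∧
    (∀ p : Finset (Fin r × Fin r) × Finset (Fin r × Fin r),
      Comp1 r p ↔ Comp2 r (p.2, p.1)) ∧
    (∃ e : {p : Finset (Fin r × Fin r) × Finset (Fin r × Fin r) // Comp1 r p} ≃
        {A : Finset (Fin r × Fin r) // FaceS r A} × Finset (Fin r),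
      ∀ p : {p : Finset (Fin r × Fin r) × Finset (Fin r × Fin r) // Comp1 r p},
        p.val.1.card + p.val.2.card = (e p).1.val.card + (e p).2.card) := by
  classical
  refine ⟨?_, ?_, ?_, ?_⟩
  · intro p
    constructor
    · rintro ⟨hf, q, hfacet, hcard, hs1, hs2⟩
      have c1 : q.1.card ≤ r := hfacet.1.1.1
      have c2 : q.2.card ≤ r := hfacet.1.2.1.1
      by_cases hq1 : q.1.card = r
      · have hq2 : q.2.card = r - 1 := by omega
        obtain ⟨he, hsub⟩ := facet_classify hr hfacet hq1 hq2
        right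
        exact ⟨hf, hs2.trans hsub, he ▸ hs1⟩
      · have hq2 : q.2.card = r := by omega
        have hq1' : q.1.card = r - 1 := by omega
        obtain ⟨he, hsub⟩ := facet_classify hr (Facet2_swap hfacet)
          (show (q.2, q.1).1.card = r from hq2) (show (q.2, q.1).2.card = r - 1 from hq1')
        left
        refine ⟨hf, hs1.trans hsub, ?_⟩
        have he' : q.2 = lastBlock r := he
        exact he' ▸ hs2
    · rintro (h | h)
      · exact comp1_to_sigma hr h
      · exact sigma_swap (comp1_to_sigma hr (comp1_swap.2 h))
  · intro p h1 h2
    have e1 : p.1 = ∅ := by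
      rw [Finset.eq_empty_iff_forall_notMem]
      intro x hx
      have ha := mem_Sblocks.1 (h1.2.1 hx)
      have hb := mem_lastBlock.1 (h2.2.2 hx)
      omega
    have e2 : p.2 = ∅ := by
      rw [Finset.eq_empty_iff_forall_notMem]
      intro x hx
      have ha := mem_lastBlock.1 (h1.2.2 hx)
      have hb := mem_Sblocks.1 (h2.2.1 hx)
      omega
    rw [Prod.ext_iff]
    exact ⟨e1, e2⟩
  · intro p
    exact comp1_swap
  · refine ⟨Equiv.mk
      (fun p => (⟨p.val.1, faceS_of_comp1 p.2⟩, p.val.2.image Prod.snd))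
      (fun x => ⟨(x.1.val, x.2.image (fun j => ((⟨r - 1, by omega⟩ : Fin r), j))),
        comp1_of_parts hr _ x.1.2 _⟩)
      ?_ ?_, ?_⟩
    · intro p
      apply Subtype.ext
      rw [Prod.ext_iff]
      refine ⟨rfl, ?_⟩
      show (p.val.2.image Prod.snd).image (fun j => ((⟨r - 1, by omega⟩ : Fin r), j)) = p.val.2
      rw [Finset.image_image]
      have heq : ∀ y ∈ p.val.2,
          ((fun j => ((⟨r - 1, by omega⟩ : Fin r), j)) ∘ Prod.snd) y = id y := by
        intro y hy
        have hv := mem_lastBlock.1 (p.2.2.2 hy)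
        simp only [Function.comp, id]
        rw [Prod.ext_iff]
        exact ⟨Fin.ext (by simp [hv]), rfl⟩
      rw [Finset.image_congr heq, Finset.image_id]
    · intro x
      rw [Prod.ext_iff]
      constructor
      · apply Subtype.ext; rfl
      · show (x.2.image (fun j => ((⟨r - 1, by omega⟩ : Fin r), j))).image Prod.snd = x.2
        rw [Finset.image_image]
        exact Finset.image_id
    · intro p
      have hinj : Set.InjOn Prod.snd (p.val.2 : Set (Fin r × Fin r)) := by
        intro a ha b hb hab
        have hav := mem_lastBlock.1 (p.2.2.2 (Finset.mem_coe.1 ha))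
        have hbv := mem_lastBlock.1 (p.2.2.2 (Finset.mem_coe.1 hb))
        rw [Prod.ext_iff]
        exact ⟨Fin.ext (by omega), hab⟩
      show p.val.1.card + p.val.2.card = p.val.1.card + (p.val.2.image Prod.snd).card
      rw [Finset.card_image_of_injOn hinj]
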